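/- arXiv:1402.7176 — 3 statements merged into one kernel-verified Lean document; each statement's English description precedes it below -/
import Mathlib

section
/- For the unit vector condition n₁ ∈ [-1,1] and angles α ∈ [0,π], β ∈ [-π/2,π/2] satisfying 0 ≤ α+β ≤ π and 0 ≤ α-β ≤ π, if cos α ≠ cos β, then the quantity (2(sin α + n₁ sin β))/(cos α - cos β) is nonpositive. -/
open Real

theorem stmt0 (n₁ α β : ℝ)
    (hn : n₁ ∈ Set.Icc (-1 : ℝ) 1)
    (hα : α ∈ Set.Icc 0 π)
    (hβ : β ∈ Set.Icc (-(π/2)) (π/2))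
    (h1 : 0 ≤ α + β) (h2 : α + β ≤ π)
    (h3 : 0 ≤ α - β) (h4 : α - β ≤ π)
    (hne : Real.cos α ≠ Real.cos β) :
    2 * (Real.sin α + n₁ * Real.sin β) / (Real.cos α - Real.cos β) ≤ 0 := by
  have hs1 : 0 ≤ Real.sin ((α + β) / 2) :=
    Real.sin_nonneg_of_nonneg_of_le_pi (by linarith) (by linarith [Real.pi_pos])
  have hs2 : 0 ≤ Real.sin ((α - β) / 2) :=
    Real.sin_nonneg_of_nonneg_of_le_pi (by linarith) (by linarith [Real.pi_pos])
  have hc1 : 0 ≤ Real.cos ((α + β) / 2) :=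
    Real.cos_nonneg_of_mem_Icc ⟨by linarith [Real.pi_pos], by linarith⟩
  have hc2 : 0 ≤ Real.cos ((α - β) / 2) :=
    Real.cos_nonneg_of_mem_Icc ⟨by linarith [Real.pi_pos], by linarith⟩
  have hsum : 0 ≤ Real.sin α + Real.sin β := by
    have h := Real.sin_sub_sin α (-β)
    rw [Real.sin_neg, sub_neg_eq_add, show α - -β = α + β by ring,
      show α + -β = α - β by ring] at h
    rw [h]; positivity
  have hdiff : 0 ≤ Real.sin α - Real.sin β := by
    rw [Real.sin_sub_sin]; positivity
  have hden : Real.cos α - Real.cos β < 0 := by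
    rcases lt_or_eq_of_le (show Real.cos α - Real.cos β ≤ 0 by
      rw [Real.cos_sub_cos]; nlinarith) with h | h
    · exact h
    · exact absurd (by linarith : Real.cos α = Real.cos β) hne
  have hnum : 0 ≤ 2 * (Real.sin α + n₁ * Real.sin β) := by
    obtain ⟨hn1, hn2⟩ := hn
    nlinarith [abs_nonneg (Real.sin β), le_abs_self (Real.sin β), neg_abs_le (Real.sin β),
      mul_le_mul_of_nonneg_right hn2 (abs_nonneg (Real.sin β))]
  exact div_nonpos_of_nonneg_of_nonpos hnum (le_of_lt hden)
end

section
/- Let U = e^{iα}(cos β · I + i sin β (n₁σ₁ + n₂σ₂ + n₃σ₃)) with σᵢ the Pauli matrices and n₁²+n₂²+n₃² = 1. Then det([[1,i],[1,L-i]] - U·[[1,-i],[1,L+i]]) = 2e^{iα}[L(cos α - cos β) - 2(sin α + n₁ sin β)]. -/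
open Complex Matrix

theorem stmt5 (L α β n₁ n₂ n₃ : ℝ) (hL : 0 < L)
    (hn : n₁ ^ 2 + n₂ ^ 2 + n₃ ^ 2 = 1) :
    (!![(1 : ℂ), I; 1, (L : ℂ) - I] -
        (Complex.exp (I * α) •
          ((Real.cos β : ℂ) • (1 : Matrix (Fin 2) (Fin 2) ℂ) +
            (I * (Real.sin β : ℂ)) •
              ((n₁ : ℂ) • !![(0 : ℂ), 1; 1, 0] +
               (n₂ : ℂ) • !![(0 : ℂ), -I; I, 0] +
               (n₃ : ℂ) • !![(1 : ℂ), 0; 0, -1]))) *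
          !![(1 : ℂ), -I; 1, (L : ℂ) + I]).det =
      2 * Complex.exp (I * α) *
        ((L * (Real.cos α - Real.cos β) - 2 * (Real.sin α + n₁ * Real.sin β) : ℝ) : ℂ) := by
  have hE : Complex.exp (I * α) = (Real.cos α : ℂ) + (Real.sin α : ℂ) * I := by
    rw [mul_comm, Complex.exp_mul_I, Complex.ofReal_cos, Complex.ofReal_sin]
  have h1 : ((Real.sin α : ℂ)) ^ 2 + ((Real.cos α : ℂ)) ^ 2 = 1 := by
    norm_cast; exact Real.sin_sq_add_cos_sq α
  have h2 : ((Real.sin β : ℂ)) ^ 2 + ((Real.cos β : ℂ)) ^ 2 = 1 := by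
    norm_cast; exact Real.sin_sq_add_cos_sq β
  have h3 : ((n₁ : ℂ)) ^ 2 + ((n₂ : ℂ)) ^ 2 + ((n₃ : ℂ)) ^ 2 = 1 := by
    norm_cast
  have hI : I ^ 2 = -1 := Complex.I_sq
  set sa := (Real.sin α : ℂ) with hsa
  set ca := (Real.cos α : ℂ) with hca
  set sb := (Real.sin β : ℂ) with hsb
  set cb := (Real.cos β : ℂ) with hcb
  simp only [hE, Matrix.det_fin_two, Matrix.sub_apply, Matrix.smul_apply,
    Matrix.add_apply, Matrix.mul_apply, Fin.sum_univ_two, Matrix.one_apply,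
    Matrix.cons_val', Matrix.cons_val_zero, Matrix.cons_val_one, Matrix.head_cons,
    Matrix.head_fin_const, Matrix.empty_val', Matrix.cons_val_fin_one,
    Matrix.of_apply, smul_eq_mul]
  push_cast
  simp only [← Complex.ofReal_sin, ← Complex.ofReal_cos, ← hsa, ← hca, ← hsb, ← hcb]
  linear_combination (-(L:ℂ) + 2 * I) * h1 +
    (-4*ca*sa + (L:ℂ)*(ca^2 - sa^2) + 2*I*(ca^2 - sa^2) + 2*I*(L:ℂ)*ca*sa) * h2 +
    sb^2 * (-4*ca*sa + (L:ℂ)*(ca^2 - sa^2) + 2*I*(ca^2 - sa^2) + 2*I*(L:ℂ)*ca*sa) * h3 +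
    (4*ca*sb*(n₁:ℂ) + 4*ca*sa*sb^2*(n₃:ℂ)^2 + 4*ca*sa*sb^2*(n₂:ℂ)^2 + 4*ca*sa*sb^2*(n₁:ℂ)^2 + 4*ca*sa*cb^2 + 1*(L:ℂ)*sa^2*sb^2*(n₃:ℂ)^2 + 1*(L:ℂ)*sa^2*sb^2*(n₂:ℂ)^2 + 1*(L:ℂ)*sa^2*sb^2*(n₁:ℂ)^2 + 1*(L:ℂ)*sa^2*cb^2 - 1*(L:ℂ)*ca^2*sb^2*(n₃:ℂ)^2 - 1*(L:ℂ)*ca^2*sb^2*(n₂:ℂ)^2 - 1*(L:ℂ)*ca^2*sb^2*(n₁:ℂ)^2 + 4*I*sa*sb*(n₁:ℂ) + 2*I*sa^2*sb^2*(n₃:ℂ)^2 + 2*I*sa^2*sb^2*(n₂:ℂ)^2 + 2*I*sa^2*sb^2*(n₁:ℂ)^2 + 2*I*sa^2*cb^2 - 2*I*ca^2*sb^2*(n₃:ℂ)^2 - 2*I*ca^2*sb^2*(n₂:ℂ)^2 - 2*I*ca^2*sb^2*(n₁:ℂ)^2 - 2*I*(L:ℂ)*ca*sa*sb^2*(n₃:ℂ)^2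 - 2*I*(L:ℂ)*ca*sa*sb^2*(n₂:ℂ)^2 - 2*I*(L:ℂ)*ca*sa*sb^2*(n₁:ℂ)^2 - 4*I^2*ca*sa*sb^2*(n₃:ℂ)^2 - 4*I^2*ca*sa*sb^2*(n₂:ℂ)^2 - 4*I^2*ca*sa*sb^2*(n₁:ℂ)^2 - 1*I^2*(L:ℂ)*sa^2*sb^2*(n₃:ℂ)^2 - 1*I^2*(L:ℂ)*sa^2*sb^2*(n₂:ℂ)^2 - 1*I^2*(L:ℂ)*sa^2*sb^2*(n₁:ℂ)^2 + 1*I^2*(L:ℂ)*ca^2*sb^2*(n₂:ℂ)^2 - 2*I^3*sa^2*sb^2*(n₃:ℂ)^2 - 2*I^3*sa^2*sb^2*(n₂:ℂ)^2 - 2*I^3*sa^2*sb^2*(n₁:ℂ)^2 + 2*I^3*ca^2*sb^2*(n₂:ℂ)^2 + 2*I^3*(L:ℂ)*ca*sa*sb^2*(n₂:ℂ)^2 + 4*I^4*ca*sa*sb^2*(n₂:ℂ)^2 + 1*I^4*(L:ℂ)*sa^2*sb^2*(n₂:ℂ)^2 + 2*I^5*sa^2*sb^2*(n₂:ℂ)^2)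 * hI
end

section
/- For the unitary matrix U_VNK = (1/(L+2i))·[[L, 2i],[2i, L]] with L > 0, writing U_VNK = e^{iα}(cos β · I + i sin β · σ₁) requires β = arctan(2/L) and α = -arctan(2/L); in particular α < 0, so U_VNK does not satisfy the constraint 0 ≤ α ± β ≤ π defining M_F, for any L > 0. -/
open Complex Matrix Real

theorem stmt17 (L : ℝ) (hL : 0 < L) :
    (∀ α β : ℝ, α ∈ Set.Icc (-π) π → β ∈ Set.Icc (-(π/2)) (π/2) →
      (((L : ℂ) + 2 * I)⁻¹ • !![(L : ℂ), 2 * I; 2 * I, (L : ℂ)] =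
        Complex.exp (I * α) •
          ((Real.cos β : ℂ) • (1 : Matrix (Fin 2) (Fin 2) ℂ) +
            (I * (Real.sin β : ℂ)) • !![(0 : ℂ), 1; 1, 0])) →
      β = Real.arctan (2 / L) ∧ α = -Real.arctan (2 / L)) ∧
    (-Real.arctan (2 / L) < 0) ∧
    ¬(0 ≤ -Real.arctan (2 / L) + Real.arctan (2 / L) ∧
      -Real.arctan (2 / L) + Real.arctan (2 / L) ≤ π ∧
      0 ≤ -Real.arctan (2 / L) - Real.arctan (2 / L) ∧
      -Real.arctan (2 / L) - Real.arctan (2 / L) ≤ π) := by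
  have harct : 0 < Real.arctan (2 / L) := by
    rw [← Real.arctan_zero]
    exact Real.arctan_strictMono (by positivity)
  refine ⟨?_, by linarith, ?_⟩
  · intro α β hα hβ heq
    have hLne : (L : ℂ) ≠ 0 := by exact_mod_cast ne_of_gt hL
    have hden : (L : ℂ) + 2 * I ≠ 0 := by
      intro h
      have := congrArg Complex.im h
      simp at this
    have h00 := congrFun (congrFun heq 0) 0
    have h01 := congrFun (congrFun heq 0) 1
    simp [Matrix.smul_apply, Matrix.add_apply, Matrix.one_apply] at h00 h01
    have hEne : Complex.exp (I * α) ≠ 0 := Complex.exp_ne_zero _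
    -- cross-multiplying: 2 cos β = L sin β
    have key : Complex.exp (I * α) * I *
        (2 * Complex.cos β - L * Complex.sin β) = 0 := by
      linear_combination (L : ℂ) * h01 - (2 * I) * h00
    have key2 : 2 * Complex.cos (β : ℂ) - (L : ℂ) * Complex.sin (β : ℂ) = 0 := by
      rcases mul_eq_zero.mp key with h | h
      · exact absurd h (mul_ne_zero hEne I_ne_zero)
      · exact h
    have hreal : 2 * Real.cos β = L * Real.sin β := by
      have : ((2 * Real.cos β - L * Real.sin β : ℝ) : ℂ) = 0 := by
        push_cast
        linear_combination key2
      have := Complex.ofReal_eq_zero.mp this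
      linarith
    have hcosne : Real.cos β ≠ 0 := by
      intro h
      have hs : Real.sin β = 0 := by
        have := hreal
        rw [h] at this
        have : L * Real.sin β = 0 := by linarith
        rcases mul_eq_zero.mp this with h' | h'
        · linarith
        · exact h'
      have := Real.sin_sq_add_cos_sq β
      rw [h, hs] at this
      norm_num at this
    have hcospos : 0 < Real.cos β := by
      have hnn : 0 ≤ Real.cos β :=
        Real.cos_nonneg_of_mem_Icc (by constructor <;> [linarith [hβ.1]; linarith [hβ.2]])
      exact lt_of_le_of_ne hnn (Ne.symm hcosne)
    have hβlt : β < π / 2 := by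
      rcases lt_or_eq_of_le hβ.2 with h | h
      · exact h
      · exfalso; rw [h] at hcosne; exact hcosne (Real.cos_pi_div_two)
    have hβgt : -(π / 2) < β := by
      rcases lt_or_eq_of_le hβ.1 with h | h
      · exact h
      · exfalso; rw [← h] at hcosne
        simp [Real.cos_neg] at hcosne
    have htan : Real.tan β = 2 / L := by
      rw [Real.tan_eq_sin_div_cos]
      field_simp
      linarith
    have hβeq : β = Real.arctan (2 / L) := by
      rw [← htan, Real.arctan_tan hβgt hβlt]
    refine ⟨hβeq, ?_⟩
    -- now α + β = 0
    have hsum : Complex.exp (I * ((α : ℂ) + β)) = 1 := by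
      have h1 : Complex.exp (I * α) * (Complex.cos β + Complex.sin β * I) = 1 := by
        have hinv : ((L : ℂ) + 2 * I)⁻¹ * ((L : ℂ) + 2 * I) = 1 := inv_mul_cancel₀ hden
        linear_combination -h00 - h01 + hinv
      calc Complex.exp (I * ((α : ℂ) + β))
          = Complex.exp (I * α) * Complex.exp ((β : ℂ) * I) := by
            rw [← Complex.exp_add]; ring_nf
        _ = Complex.exp (I * α) * (Complex.cos β + Complex.sin β * I) := by
            rw [Complex.exp_mul_I]
        _ = 1 := h1
    rw [show ((α : ℂ) + β) = ((α + β : ℝ) : ℂ) by push_cast; ring] at hsum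
    obtain ⟨n, hn⟩ := Complex.exp_eq_one_iff.mp hsum
    have hab : α + β = n * (2 * π) := by
      have hn' : I * ((α : ℂ) + β) = I * ((n : ℂ) * (2 * π)) := by
        push_cast at hn
        linear_combination hn
      have h2 := mul_left_cancel₀ I_ne_zero hn'
      exact_mod_cast h2
    have hpi := Real.pi_pos
    have hn0 : n = 0 := by
      rcases lt_trichotomy n 0 with h | h | h
      · exfalso
        have h1 : (n : ℝ) ≤ -1 := by exact_mod_cast Int.le_sub_one_of_lt h
        nlinarith [hα.1, hβ.1]
      · exact h
      · exfalso
        have h1 : (1 : ℝ) ≤ (n : ℝ) := by exact_mod_cast h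
        nlinarith [hα.2, hβ.2]
    rw [hn0] at hab
    simp at hab
    rw [← hβeq]
    linarith
  · rintro ⟨-, -, h3, -⟩
    linarith
end
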